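/- Let 1 ≤ p < 2 and let Z have density g_p(x) = e^{−|x|^p}/(2Γ(1+1/p)). Then the kurtosis E Z⁴/(E Z²)² = Γ(5/p)Γ(1/p)/Γ(3/p)² is strictly greater than 3. -/

import Mathlib

open Real MeasureTheory

open Real MeasureTheory Filter Finset in
private theorem gamma_kurtosis_lt (a : ℝ) (ha : 1/2 < a) :
    3 < Gamma (5*a) * Gamma a / Gamma (3*a)^2 := by
  have ha0 : 0 < a := by linarith
  set v : ℕ → ℝ := fun i => (3*a+(i:ℝ))^2/((5*a+(i:ℝ))*(a+(i:ℝ))) with hv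
  set w : ℕ → ℝ := fun i => ((i:ℝ)+3/2)^2/(((i:ℝ)+5/2)*((i:ℝ)+1/2)) with hw
  have hwpos : ∀ i : ℕ, 0 < w i := fun i => by
    simp only [hw]; positivity
  have hvpos : ∀ i : ℕ, 0 < v i := fun i => by
    simp only [hv]; positivity
  have hwv : ∀ i : ℕ, w i ≤ v i := by
    intro i
    have hi : (0:ℝ) ≤ (i:ℝ) := i.cast_nonneg
    simp only [hv, hw]
    rw [div_le_div_iff₀ (by positivity) (by positivity)]
    nlinarith [mul_nonneg (mul_nonneg hi (by linarith : (0:ℝ) ≤ 2*a-1))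
      (by nlinarith : (0:ℝ) ≤ (2*a+1)*(i:ℝ)+6*a)]
  -- strict at i = 1
  have hw1 : w 1 < v 1 := by
    simp only [hv, hw]
    push_cast
    rw [div_lt_div_iff₀ (by norm_num) (by positivity)]
    nlinarith [mul_pos (by linarith : (0:ℝ) < 2*a-1) (by linarith : (0:ℝ) < 8*a+1)]
  have hc : 1 < v 1 / w 1 := (one_lt_div (hwpos 1)).mpr hw1
  -- product of w
  have hWprod : ∀ n : ℕ, ∏ i ∈ Finset.range (n+1), w i = 3*(2*(n:ℝ)+3)/(2*(n:ℝ)+5) := by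
    intro n
    induction n with
    | zero => simp only [hw]; norm_num
    | succ n ih =>
      rw [Finset.prod_range_succ, ih]
      have h1 : (0:ℝ) < 2*(n:ℝ)+5 := by positivity
      have h2 : (0:ℝ) < (n:ℝ)+1+5/2 := by positivity
      have h3 : (0:ℝ) < (n:ℝ)+1+1/2 := by positivity
      simp only [hw]
      push_cast
      field_simp
      ring
  -- lower bound for product of v
  have hlow : ∀ n : ℕ, 1 ≤ n →
      3*(2*(n:ℝ)+3)/(2*(n:ℝ)+5) * (v 1 / w 1) ≤ ∏ i ∈ Finset.range (n+1), v i := by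
    intro n hn
    have hmem : 1 ∈ Finset.range (n+1) := Finset.mem_range.mpr (by omega)
    have h1 : ∀ i : ℕ, v i = w i * (v i / w i) := fun i => by
      have := (hwpos i).ne'
      field_simp
    calc 3*(2*(n:ℝ)+3)/(2*(n:ℝ)+5) * (v 1 / w 1)
        = (∏ i ∈ Finset.range (n+1), w i) * (v 1 / w 1) := by rw [hWprod n]
      _ = v 1 * ∏ i ∈ (Finset.range (n+1)).erase 1, w i := by
          rw [← Finset.mul_prod_erase _ w hmem]
          field_simp
          ring
      _ ≤ v 1 * ∏ i ∈ (Finset.range (n+1)).erase 1, v i := by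
          refine mul_le_mul_of_nonneg_left ?_ (le_of_lt (hvpos 1))
          exact Finset.prod_le_prod (fun i _ => (hwpos i).le) (fun i _ => hwv i)
      _ = ∏ i ∈ Finset.range (n+1), v i := Finset.mul_prod_erase _ v hmem
  -- tendsto of product of v to the Gamma expression
  have hG3 : Gamma (3*a) ≠ 0 := (Gamma_pos_of_pos (by linarith)).ne'
  have hT1 : Tendsto (fun n : ℕ => ∏ i ∈ Finset.range (n+1), v i) atTop
      (nhds (Gamma (5*a) * Gamma a / Gamma (3*a)^2)) := by
    have hGS : Tendsto (fun n : ℕ => Real.GammaSeq (5*a) n * Real.GammaSeq a n /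
        (Real.GammaSeq (3*a) n)^2) atTop (nhds (Gamma (5*a) * Gamma a / Gamma (3*a)^2)) :=
      ((Real.GammaSeq_tendsto_Gamma (5*a)).mul (Real.GammaSeq_tendsto_Gamma a)).div
        ((Real.GammaSeq_tendsto_Gamma (3*a)).pow 2) (pow_ne_zero 2 hG3)
    refine hGS.congr' ?_
    filter_upwards [eventually_ge_atTop 1] with n hn
    have hn0 : (0:ℝ) < (n:ℝ) := by exact_mod_cast hn
    have key : (n:ℝ)^(5*a) * (n:ℝ)^a = ((n:ℝ)^(3*a))^2 := by
      rw [sq, ← Real.rpow_add hn0, ← Real.rpow_add hn0]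
      ring_nf
    have hrhs : ∏ j ∈ Finset.range (n+1), v j
        = (∏ j ∈ Finset.range (n+1), (3*a+(j:ℝ)))^2 /
          ((∏ j ∈ Finset.range (n+1), (5*a+(j:ℝ))) * (∏ j ∈ Finset.range (n+1), (a+(j:ℝ)))) := by
      simp only [hv]
      rw [Finset.prod_div_distrib, Finset.prod_pow, Finset.prod_mul_distrib]
    have hA : (0:ℝ) < ∏ j ∈ Finset.range (n+1), (5*a+(j:ℝ)) :=
      Finset.prod_pos fun j _ => by positivity
    have hB : (0:ℝ) < ∏ j ∈ Finset.range (n+1), (a+(j:ℝ)) :=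
      Finset.prod_pos fun j _ => by positivity
    have hC : (0:ℝ) < ∏ j ∈ Finset.range (n+1), (3*a+(j:ℝ)) :=
      Finset.prod_pos fun j _ => by positivity
    have hf : (0:ℝ) < (n.factorial : ℝ) := by exact_mod_cast n.factorial_pos
    have h5 : (0:ℝ) < (n:ℝ)^(5*a) := rpow_pos_of_pos hn0 _
    have h3 : (0:ℝ) < (n:ℝ)^(3*a) := rpow_pos_of_pos hn0 _
    have h1 : (0:ℝ) < (n:ℝ)^a := rpow_pos_of_pos hn0 _
    rw [hrhs, Real.GammaSeq, Real.GammaSeq, Real.GammaSeq]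
    field_simp
    rw [show a*3 = 3*a by ring]
    linear_combination key
  -- tendsto of lower bound
  have hT2 : Tendsto (fun n : ℕ => 3*(2*(n:ℝ)+3)/(2*(n:ℝ)+5) * (v 1 / w 1)) atTop
      (nhds (3 * (v 1 / w 1))) := by
    have h : Tendsto (fun n : ℕ => 2*(n:ℝ)+5) atTop atTop :=
      tendsto_atTop_add_const_right _ 5 (tendsto_natCast_atTop_atTop.const_mul_atTop two_pos)
    have h0 : Tendsto (fun n : ℕ => (6:ℝ)/(2*(n:ℝ)+5)) atTop (nhds 0) :=
      tendsto_const_nhds.div_atTop h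
    have h3' := (tendsto_const_nhds (x := (3:ℝ)) (f := atTop (α := ℕ))).sub h0
    rw [sub_zero] at h3'
    have h3'' : Tendsto (fun n : ℕ => 3*(2*(n:ℝ)+3)/(2*(n:ℝ)+5)) atTop (nhds 3) := by
      refine h3'.congr fun n => ?_
      have : (0:ℝ) < 2*(n:ℝ)+5 := by positivity
      field_simp
      ring
    exact h3''.mul_const _
  have hle : 3 * (v 1 / w 1) ≤ Gamma (5*a) * Gamma a / Gamma (3*a)^2 := by
    refine le_of_tendsto_of_tendsto hT2 hT1 ?_
    filter_upwards [eventually_ge_atTop 1] with n hn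
    exact hlow n hn
  calc (3:ℝ) = 3 * 1 := by norm_num
    _ < 3 * (v 1 / w 1) := by linarith
    _ ≤ _ := hle

open Real MeasureTheory Filter in
private theorem moment_eval (p : ℝ) (hp1 : 1 ≤ p) (k : ℕ)
    (hk : ∀ x : ℝ, |x| ^ k = x ^ k) :
    (∫ x : ℝ, x ^ k * (exp (-|x| ^ p) / (2 * Gamma (1 + 1 / p))))
      = 2 * ((1/p) * Gamma (((k:ℝ)+1)/p)) / (2 * Gamma (1 + 1/p)) := by
  have hp0 : 0 < p := by linarith
  have h1 : (∫ x : ℝ, x ^ k * (exp (-|x| ^ p) / (2 * Gamma (1 + 1 / p))))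
      = (∫ x : ℝ, x ^ k * exp (-|x| ^ p)) / (2 * Gamma (1 + 1/p)) := by
    simp_rw [← mul_div_assoc]
    exact integral_div _ _
  rw [h1]
  congr 1
  have h2 : (fun x : ℝ => x ^ k * exp (-|x| ^ p))
      = fun x : ℝ => |x| ^ k * exp (-|x| ^ p) := by
    funext x
    rw [hk]
  rw [h2, integral_comp_abs (f := fun x => x ^ k * exp (-x ^ p))]
  congr 1
  rw [← integral_rpow_mul_exp_neg_rpow hp0
    (by have : (0:ℝ) ≤ (k:ℝ) := k.cast_nonneg; linarith : (-1:ℝ) < (k:ℝ))]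
  refine setIntegral_congr_fun measurableSet_Ioi fun x hx => ?_
  rw [Real.rpow_natCast]

theorem stmt_11 (p : ℝ) (hp1 : 1 ≤ p) (hp2 : p < 2) :
    (∫ x : ℝ, x ^ 4 * (exp (-|x| ^ p) / (2 * Gamma (1 + 1 / p)))) /
        (∫ x : ℝ, x ^ 2 * (exp (-|x| ^ p) / (2 * Gamma (1 + 1 / p)))) ^ 2
      = Gamma (5 / p) * Gamma (1 / p) / Gamma (3 / p) ^ 2 ∧
    3 < Gamma (5 / p) * Gamma (1 / p) / Gamma (3 / p) ^ 2 := by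
  have hp0 : 0 < p := by linarith
  constructor
  · have h4 : ∀ x : ℝ, |x| ^ 4 = x ^ 4 := fun x => by
      rw [pow_abs, abs_of_nonneg (by positivity)]
    have h2 : ∀ x : ℝ, |x| ^ 2 = x ^ 2 := fun x => by
      rw [pow_abs, abs_of_nonneg (by positivity)]
    rw [moment_eval p hp1 4 h4, moment_eval p hp1 2 h2]
    have e5 : (((4:ℕ):ℝ)+1)/p = 5/p := by norm_num
    have e3 : (((2:ℕ):ℝ)+1)/p = 3/p := by norm_num
    rw [e5, e3]
    have hΓ1 : Gamma (1+1/p) = (1/p) * Gamma (1/p) := by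
      rw [add_comm, Real.Gamma_add_one (by positivity)]
    rw [hΓ1]
    have hG1 : 0 < Gamma (1/p) := Real.Gamma_pos_of_pos (by positivity)
    have hG3 : 0 < Gamma (3/p) := Real.Gamma_pos_of_pos (by positivity)
    have hG5 : 0 < Gamma (5/p) := Real.Gamma_pos_of_pos (by positivity)
    field_simp
  · have ha : 1/2 < 1/p := by
      rw [lt_div_iff₀ hp0]
      linarith
    have := gamma_kurtosis_lt (1/p) ha
    rw [show 5*(1/p) = 5/p by ring, show 3*(1/p) = 3/p by ring] at this
    exact this
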